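/- Let Y be a locally compact metric space and Y₀ = {p*} a singleton in Y. If every compact subset of Y containing p* has nonempty boundary in Y, then Y \ {p*} contains a connected subset whose closure in Y is non-compact and contains p*. -/

import Mathlib

open Set Topology OnePoint

/-- The intersection of a directed family of nonempty compact preconnected sets in a
Hausdorff space is preconnected. -/
lemma aux_iInter_preconnected {X : Type*} [TopologicalSpace X] [T2Space X] {ι : Type*}
    [Nonempty ι] (K : ι → Set X) (hd : Directed (· ⊇ ·) K) (hc : ∀ i, IsCompact (K i))
    (hconn : ∀ i, IsPreconnected (K i)) (hne : ∀ i, (K i).Nonempty) :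
    IsPreconnected (⋂ i, K i) := by
  rw [isPreconnected_closed_iff]
  intro t t' ht ht' hcov hA hB
  by_contra hemp
  set Z := ⋂ i, K i with hZ
  have hcl : ∀ i, IsClosed (K i) := fun i => (hc i).isClosed
  have hZcl : IsClosed Z := isClosed_iInter hcl
  have hZc : IsCompact Z :=
    (hc (Classical.arbitrary ι)).of_isClosed_subset hZcl (iInter_subset _ _)
  have hAB : Disjoint (Z ∩ t) (Z ∩ t') := by
    rw [Set.disjoint_iff_inter_eq_empty]
    rw [Set.not_nonempty_iff_eq_empty] at hemp
    rw [← hemp]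
    ext x
    simp only [Set.mem_inter_iff]
    tauto
  obtain ⟨u, v, hu, hv, hAu, hBv, huv⟩ :=
    SeparatedNhds.of_isCompact_isCompact (hZc.inter_right ht) (hZc.inter_right ht') hAB
  -- some member of the family is contained in `u ∪ v`
  have hLne : ¬ ∀ i, (K i \ (u ∪ v)).Nonempty := by
    intro hall
    have hdir : Directed (· ⊇ ·) (fun i => K i \ (u ∪ v)) := by
      intro i j
      obtain ⟨k, hk1, hk2⟩ := hd i j
      exact ⟨k, Set.diff_subset_diff_left hk1, Set.diff_subset_diff_left hk2⟩
    obtain ⟨x, hx⟩ := IsCompact.nonempty_iInter_of_directed_nonempty_isCompact_isClosed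
      (fun i => K i \ (u ∪ v)) hdir hall (fun i => (hc i).diff (hu.union hv))
      (fun i => (hcl i).sdiff (hu.union hv))
    rw [Set.mem_iInter] at hx
    have hxZ : x ∈ Z := Set.mem_iInter.mpr fun i => ((hx i).1)
    have hxuv : x ∉ u ∪ v := (hx (Classical.arbitrary ι)).2
    have : x ∈ t ∪ t' := hcov hxZ
    rcases this with h | h
    · exact hxuv (Or.inl (hAu ⟨hxZ, h⟩))
    · exact hxuv (Or.inr (hBv ⟨hxZ, h⟩))
  push_neg at hLne
  obtain ⟨i, hi⟩ := hLne
  rw [Set.diff_eq_empty] at hi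
  obtain ⟨z, hz⟩ := hconn i u v hu hv hi
    ((hA.mono fun x hx => ⟨Set.mem_iInter.mp hx.1 i, hAu hx⟩))
    ((hB.mono fun x hx => ⟨Set.mem_iInter.mp hx.1 i, hBv hx⟩))
  exact (huv.ne_of_mem hz.2.1 hz.2.2) rfl

/-- Whyburn separation dichotomy: in a compact Hausdorff set `K`, two points either lie in a
common compact connected subset, or `K` splits into two disjoint closed sets, one containing
each point. -/
lemma aux_dichotomy {X : Type*} [TopologicalSpace X] [T2Space X] {K : Set X} (hK : IsCompact K)
    {a b : X} (ha : a ∈ K) (hb : b ∈ K) :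
    (∃ P, P ⊆ K ∧ IsCompact P ∧ IsPreconnected P ∧ a ∈ P ∧ b ∈ P) ∨
    (∃ K₁ K₂, K₁ ∪ K₂ = K ∧ IsClosed K₁ ∧ IsClosed K₂ ∧ Disjoint K₁ K₂ ∧ a ∈ K₁ ∧ b ∈ K₂) := by
  haveI : CompactSpace K := isCompact_iff_compactSpace.mp hK
  set a' : K := ⟨a, ha⟩
  set b' : K := ⟨b, hb⟩
  by_cases hbc : b' ∈ connectedComponent a'
  · left
    refine ⟨Subtype.val '' connectedComponent a', Subtype.coe_image_subset _ _,
      (isClosed_connectedComponent.isCompact).image continuous_subtype_val,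
      isPreconnected_connectedComponent.image _ continuous_subtype_val.continuousOn,
      ⟨a', mem_connectedComponent, rfl⟩, ⟨b', hbc, rfl⟩⟩
  · right
    rw [connectedComponent_eq_iInter_isClopen, Set.mem_iInter] at hbc
    push_neg at hbc
    obtain ⟨⟨Z, hZ, haZ⟩, hbZ⟩ := hbc
    refine ⟨Subtype.val '' Z, Subtype.val '' Zᶜ, ?_, ?_, ?_, ?_, ⟨a', haZ, rfl⟩, ⟨b', hbZ, rfl⟩⟩
    · rw [← Set.image_union, Set.union_compl_self, Set.image_univ, Subtype.range_val]
    · exact ((hZ.isClosed.isCompact).image continuous_subtype_val).isClosed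
    · exact ((hZ.compl.isClosed.isCompact).image continuous_subtype_val).isClosed
    · exact (Set.disjoint_image_iff Subtype.val_injective).mpr disjoint_compl_right

/-- In a compact connected Hausdorff space which is irreducible between `a` and `b`
(no proper closed connected subset contains both), the complement of `{a, b}`
is preconnected. -/
lemma aux_main {X : Type*} [TopologicalSpace X] [CompactSpace X] [T2Space X]
    [PreconnectedSpace X] {a b : X}
    (hmin : ∀ K : Set X, IsClosed K → IsPreconnected K → a ∈ K → b ∈ K → K = Set.univ) :
    IsPreconnected ({a, b}ᶜ : Set X) := by
  intro u v hu hv hcov hune hvne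
  by_contra hemp
  rw [Set.not_nonempty_iff_eq_empty] at hemp
  have hpair : IsClosed ({a, b} : Set X) := ((Set.finite_singleton b).insert a).isClosed
  set U : Set X := {a, b}ᶜ ∩ u with hUdef
  set V : Set X := {a, b}ᶜ ∩ v with hVdef
  have hUo : IsOpen U := hpair.isOpen_compl.inter hu
  have hVo : IsOpen V := hpair.isOpen_compl.inter hv
  have hUV : Disjoint U V := by
    rw [Set.disjoint_iff_inter_eq_empty, ← hemp]
    ext x
    simp only [hUdef, hVdef, Set.mem_inter_iff, Set.mem_compl_iff]
    tauto
  have hUVcov : U ∪ V = {a, b}ᶜ := by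
    apply Set.Subset.antisymm
    · exact Set.union_subset Set.inter_subset_left Set.inter_subset_left
    · intro x hx
      rcases hcov hx with h | h
      · exact Or.inl ⟨hx, h⟩
      · exact Or.inr ⟨hx, h⟩
  -- closures
  have hclU : closure U ⊆ U ∪ {a, b} := by
    intro x hx
    by_cases hab : x ∈ ({a, b} : Set X)
    · exact Or.inr hab
    have hxV : x ∉ V := fun hxV => ((hUV.closure_left hVo).ne_of_mem hx hxV) rfl
    have : x ∈ U ∪ V := hUVcov.symm ▸ hab
    rcases this with h | h
    · exact Or.inl h
    · exact absurd h hxV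
  have hclV : closure V ⊆ V ∪ {a, b} := by
    intro x hx
    by_cases hab : x ∈ ({a, b} : Set X)
    · exact Or.inr hab
    have hxU : x ∉ U := fun hxU => ((hUV.symm.closure_left hUo).ne_of_mem hx hxU) rfl
    have : x ∈ U ∪ V := hUVcov.symm ▸ hab
    rcases this with h | h
    · exact absurd h hxU
    · exact Or.inl h
  set K : Set X := closure U ∪ {a, b} with hKdef
  set L : Set X := closure V ∪ {a, b} with hLdef
  have hKcl : IsClosed K := isClosed_closure.union hpair
  have hLcl : IsClosed L := isClosed_closure.union hpair
  have haK : a ∈ K := Or.inr (Set.mem_insert a _)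
  have hbK : b ∈ K := Or.inr (Set.mem_insert_of_mem a rfl)
  have haL : a ∈ L := Or.inr (Set.mem_insert a _)
  have hbL : b ∈ L := Or.inr (Set.mem_insert_of_mem a rfl)
  have hKL : K ∩ L ⊆ {a, b} := by
    rintro x ⟨hxK, hxL⟩
    rcases hxK with hxK | hxK
    · rcases hxL with hxL | hxL
      · -- x ∈ closure U ∩ closure V
        rcases hclU hxK with h1 | h1
        · rcases hclV hxL with h2 | h2
          · exact absurd rfl (hUV.ne_of_mem h1 h2)
          · exact h2
        · exact h1
      · exact hxL
    · exact hxK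
  have hKLuniv : K ∪ L = Set.univ := by
    apply Set.eq_univ_of_forall
    intro x
    by_cases hab : x ∈ ({a, b} : Set X)
    · exact Or.inl (Or.inr hab)
    · rcases (hUVcov.symm ▸ hab : x ∈ U ∪ V) with h | h
      · exact Or.inl (Or.inl (subset_closure h))
      · exact Or.inr (Or.inl (subset_closure h))
  -- Apply the dichotomy to K and L
  rcases aux_dichotomy hKcl.isCompact haK hbK with ⟨P, hPK, hPc, hPconn, haP, hbP⟩ | hsepK
  · -- a common continuum in K: by minimality it is everything, so V is empty
    have := hmin P hPc.isClosed hPconn haP hbP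
    obtain ⟨x, hx⟩ := hvne
    have hxV : x ∈ V := ⟨hx.1, hx.2⟩
    have hxK : x ∈ K := hPK (this ▸ Set.mem_univ x)
    rcases hxK with hxK | hxK
    · rcases hclU hxK with h | h
      · exact (hUV.ne_of_mem h hxV) rfl
      · exact hxV.1 h
    · exact hxV.1 hxK
  rcases aux_dichotomy hLcl.isCompact haL hbL with ⟨P, hPL, hPc, hPconn, haP, hbP⟩ | hsepL
  · have := hmin P hPc.isClosed hPconn haP hbP
    obtain ⟨x, hx⟩ := hune
    have hxU : x ∈ U := ⟨hx.1, hx.2⟩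
    have hxL : x ∈ L := hPL (this ▸ Set.mem_univ x)
    rcases hxL with hxL | hxL
    · rcases hclV hxL with h | h
      · exact (hUV.ne_of_mem hxU h) rfl
      · exact hxU.1 h
    · exact hxU.1 hxL
  -- both split: build a clopen separation of X, contradiction
  obtain ⟨K₁, K₂, hKun, hK₁, hK₂, hK₁₂, haK₁, hbK₂⟩ := hsepK
  obtain ⟨L₁, L₂, hLun, hL₁, hL₂, hL₁₂, haL₁, hbL₂⟩ := hsepL
  set M : Set X := K₁ ∪ L₁ with hMdef
  set N : Set X := K₂ ∪ L₂ with hNdef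
  have hMN : M ∪ N = Set.univ := by
    rw [hMdef, hNdef, Set.union_union_union_comm, hKun, hLun, hKLuniv]
  have hMNdisj : Disjoint M N := by
    rw [Set.disjoint_union_left]
    constructor
    · rw [Set.disjoint_union_right]
      refine ⟨hK₁₂, ?_⟩
      -- K₁ ∩ L₂ ⊆ {a,b}, but a ∉ L₂ and b ∉ K₁
      rw [Set.disjoint_left]
      intro x hx1 hx2
      have : x ∈ ({a, b} : Set X) := hKL ⟨hKun ▸ Or.inl hx1, hLun ▸ Or.inr hx2⟩
      rcases this with h | h
      · subst h; exact (hL₁₂.ne_of_mem haL₁ hx2) rfl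
      · rw [Set.mem_singleton_iff] at h; subst h
        exact (hK₁₂.ne_of_mem hx1 hbK₂) rfl
    · rw [Set.disjoint_union_right]
      constructor
      · rw [Set.disjoint_left]
        intro x hx1 hx2
        have : x ∈ ({a, b} : Set X) := hKL ⟨hKun ▸ Or.inr hx2, hLun ▸ Or.inl hx1⟩
        rcases this with h | h
        · subst h; exact (hK₁₂.ne_of_mem haK₁ hx2) rfl
        · rw [Set.mem_singleton_iff] at h; subst h
          exact (hL₁₂.ne_of_mem hx1 hbL₂) rfl
      · exact hL₁₂
  have hMcl : IsClosed M := hK₁.union hL₁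
  have hNcl : IsClosed N := hK₂.union hL₂
  have hMclopen : IsClopen M := by
    refine ⟨hMcl, ?_⟩
    have : M = Nᶜ := by
      apply Set.Subset.antisymm
      · intro x hx hxN
        exact (hMNdisj.ne_of_mem hx hxN) rfl
      · intro x hx
        rcases (hMN ▸ Set.mem_univ x : x ∈ M ∪ N) with h | h
        · exact h
        · exact absurd h hx
    rw [this]
    exact hNcl.isOpen_compl
  rcases isClopen_iff.mp hMclopen with hM | hM
  · exact (hM ▸ (Or.inl haK₁ : a ∈ M) : a ∈ (∅ : Set X))
  · have hbM : b ∈ M := hM ▸ Set.mem_univ b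
    exact (hMNdisj.ne_of_mem hbM (Or.inl hbK₂)) rfl

/-- Whyburn-type lemma for a singleton: if `Y` is a locally compact metric space, `p* ∈ Y`,
and every compact subset of `Y` containing `p*` has nonempty boundary in `Y`, then
`Y \ {p*}` contains a connected subset whose closure in `Y` is non-compact and contains `p*`. -/
theorem stmt_19 {Y : Type*} [MetricSpace Y] [LocallyCompactSpace Y] (p : Y)
    (h : ∀ K : Set Y, IsCompact K → p ∈ K → (frontier K).Nonempty) :
    ∃ D : Set Y, D ⊆ {p}ᶜ ∧ IsConnected D ∧
      ¬ IsCompact (closure D) ∧ p ∈ closure D := by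
  classical
  haveI : T2Space (OnePoint Y) := inferInstance
  set q : OnePoint Y := (p : OnePoint Y) with hqdef
  -- Step 1: ∞ lies in the connected component of q in the one-point compactification
  have hinf : (∞ : OnePoint Y) ∈ connectedComponent q := by
    by_contra hc
    rw [connectedComponent_eq_iInter_isClopen, Set.mem_iInter] at hc
    push_neg at hc
    obtain ⟨⟨Z, hZ, hqZ⟩, hinfZ⟩ := hc
    set K : Set Y := ((↑) : Y → OnePoint Y) ⁻¹' Z with hKdef
    have hKclopen : IsClopen K := hZ.preimage OnePoint.continuous_coe
    have hZr : Z ⊆ Set.range ((↑) : Y → OnePoint Y) := by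
      intro z hz
      by_contra hzr
      rw [OnePoint.notMem_range_coe_iff] at hzr
      exact hinfZ (hzr ▸ hz)
    have himg : ((↑) : Y → OnePoint Y) '' K = Z := Set.image_preimage_eq_of_subset hZr
    have hKc : IsCompact K := by
      rw [OnePoint.isOpenEmbedding_coe.isEmbedding.isCompact_iff, himg]
      exact hZ.isClosed.isCompact
    obtain ⟨x, hx⟩ := h K hKc hqZ
    rw [hKclopen.frontier_eq] at hx
    exact hx
  -- Step 2: extract a minimal continuum joining q and ∞ via Zorn's lemma
  set S : Set (Set (OnePoint Y)) :=
    {K | IsCompact K ∧ IsPreconnected K ∧ q ∈ K ∧ (∞ : OnePoint Y) ∈ K} with hSdef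
  have hCS : connectedComponent q ∈ S :=
    ⟨isClosed_connectedComponent.isCompact, isPreconnected_connectedComponent,
      mem_connectedComponent, hinf⟩
  have hzorn : ∀ c ⊆ S, IsChain (· ⊆ ·) c → c.Nonempty → ∃ lb ∈ S, ∀ s ∈ c, lb ⊆ s := by
    intro c hcS hchain hcne
    haveI : Nonempty c := hcne.coe_sort
    have hdir : Directed (· ⊇ ·) (fun i : c => (i : Set (OnePoint Y))) := by
      rintro ⟨i, hi⟩ ⟨j, hj⟩
      rcases eq_or_ne i j with rfl | hne
      · exact ⟨⟨i, hi⟩, Set.Subset.rfl, Set.Subset.rfl⟩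
      · rcases hchain hi hj hne with hij | hji
        · exact ⟨⟨i, hi⟩, Set.Subset.rfl, hij⟩
        · exact ⟨⟨j, hj⟩, hji, Set.Subset.rfl⟩
    refine ⟨⋂₀ c, ⟨?_, ?_, ?_, ?_⟩, fun s hs => Set.sInter_subset_of_mem hs⟩
    · obtain ⟨s₀, hs₀⟩ := hcne
      exact (hcS hs₀).1.of_isClosed_subset
        (isClosed_sInter fun t ht => (hcS ht).1.isClosed) (Set.sInter_subset_of_mem hs₀)
    · rw [Set.sInter_eq_iInter]
      exact aux_iInter_preconnected _ hdir (fun i => (hcS i.2).1)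
        (fun i => (hcS i.2).2.1) (fun i => ⟨q, (hcS i.2).2.2.1⟩)
    · exact Set.mem_sInter.mpr fun s hs => (hcS hs).2.2.1
    · exact Set.mem_sInter.mpr fun s hs => (hcS hs).2.2.2
  obtain ⟨C, -, hCmem, hCmin⟩ := zorn_superset_nonempty S hzorn _ hCS
  obtain ⟨hCcomp, hCconn, hqC, hinfC⟩ := hCmem
  -- Step 3: the minimal continuum minus the two points is connected
  haveI : CompactSpace C := isCompact_iff_compactSpace.mp hCcomp
  haveI : PreconnectedSpace C := Subtype.preconnectedSpace hCconn
  set a' : C := ⟨q, hqC⟩ with ha'def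
  set b' : C := ⟨(∞ : OnePoint Y), hinfC⟩ with hb'def
  have hmin' : ∀ K : Set C, IsClosed K → IsPreconnected K → a' ∈ K → b' ∈ K →
      K = Set.univ := by
    intro K hKcl hKco haK hbK
    have h1 : Subtype.val '' K ∈ S :=
      ⟨hKcl.isCompact.image continuous_subtype_val,
        hKco.image _ continuous_subtype_val.continuousOn, ⟨a', haK, rfl⟩, ⟨b', hbK, rfl⟩⟩
    have h3 : C ⊆ Subtype.val '' K := hCmin h1 (Subtype.coe_image_subset _ _)
    apply Set.eq_univ_of_forall
    intro x
    obtain ⟨y, hy, hxy⟩ := h3 x.2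
    rwa [show y = x from Subtype.ext hxy] at hy
  have hconn' : IsPreconnected ({a', b'}ᶜ : Set C) := aux_main hmin'
  have hD0 : Subtype.val '' ({a', b'}ᶜ : Set C) = C \ {q, ∞} := by
    ext x
    constructor
    · rintro ⟨y, hy, rfl⟩
      refine ⟨y.2, fun hx => hy ?_⟩
      rcases hx with hx | hx
      · exact Or.inl (Subtype.ext hx)
      · exact Or.inr (Subtype.ext hx)
    · rintro ⟨hxC, hx⟩
      refine ⟨⟨x, hxC⟩, fun hy => hx ?_, rfl⟩
      rcases hy with hy | hy
      · exact Or.inl (congrArg Subtype.val hy)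
      · exact Or.inr (congrArg Subtype.val hy)
  have hD0conn : IsPreconnected (C \ ({q, ∞} : Set (OnePoint Y))) := by
    rw [← hD0]
    exact hconn'.image _ continuous_subtype_val.continuousOn
  -- Step 4: q and ∞ lie in the closure of C \ {q, ∞}
  have hkey : ∀ x y : OnePoint Y, x ∈ C → y ∈ C → x ≠ y →
      x ∈ closure (C \ {x, y}) := by
    intro x y hx hy hxy
    rw [mem_closure_iff]
    intro o ho hxo
    have hvo : IsOpen (o \ {y}) := ho.sdiff isClosed_singleton
    have hcv : C ⊆ (o \ {y}) ∪ {x}ᶜ := by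
      intro w hw
      by_cases hwx : w = x
      · exact Or.inl ⟨hwx ▸ hxo, by simp [hwx, hxy]⟩
      · exact Or.inr hwx
    obtain ⟨z, hzC, ⟨hzo, hzy⟩, hzx⟩ :=
      hCconn (o \ {y}) ({x}ᶜ) hvo isOpen_compl_singleton hcv
        ⟨x, hx, ⟨hxo, by simp [hxy]⟩⟩ ⟨y, hy, by simp [Ne.symm hxy]⟩
    refine ⟨z, hzo, hzC, fun hz => ?_⟩
    rcases hz with hz | hz
    · exact hzx hz
    · exact hzy hz
  have hqne : q ≠ (∞ : OnePoint Y) := OnePoint.coe_ne_infty p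
  have hclq : q ∈ closure (C \ ({q, ∞} : Set (OnePoint Y))) := hkey q ∞ hqC hinfC hqne
  have hclinf : (∞ : OnePoint Y) ∈ closure (C \ ({q, ∞} : Set (OnePoint Y))) := by
    have := hkey ∞ q hinfC hqC hqne.symm
    rwa [Set.pair_comm] at this
  -- Step 5: pull back to Y
  set D : Set Y := ((↑) : Y → OnePoint Y) ⁻¹' (C \ {q, ∞}) with hDdef
  have hsub : C \ ({q, ∞} : Set (OnePoint Y)) ⊆ Set.range ((↑) : Y → OnePoint Y) := by
    rintro z ⟨hzC, hz⟩
    by_contra hzr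
    rw [OnePoint.notMem_range_coe_iff] at hzr
    exact hz (Or.inr hzr)
  have hDimg : ((↑) : Y → OnePoint Y) '' D = C \ {q, ∞} :=
    Set.image_preimage_eq_of_subset hsub
  have hDne : D.Nonempty := by
    have hne : (C \ ({q, ∞} : Set (OnePoint Y))).Nonempty := by
      by_contra hc
      rw [Set.not_nonempty_iff_eq_empty, Set.diff_eq_empty] at hc
      obtain ⟨u, v, hu, hv, hqu, hiv, huv⟩ := t2_separation hqne
      obtain ⟨z, hzC, hzu, hzv⟩ := hCconn u v hu hv
        (fun x hx => by rcases hc hx with hx | hx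
                        · exact Or.inl (hx ▸ hqu)
                        · exact Or.inr (hx ▸ hiv))
        ⟨q, hqC, hqu⟩ ⟨∞, hinfC, hiv⟩
      exact (huv.ne_of_mem hzu hzv) rfl
    obtain ⟨z, hz⟩ := hne
    obtain ⟨y, rfl⟩ := hsub hz
    exact ⟨y, hz⟩
  have hDconn : IsConnected D := by
    refine ⟨hDne, ?_⟩
    have := hD0conn
    rw [← hDimg] at this
    exact OnePoint.isOpenEmbedding_coe.isEmbedding.toIsInducing.isPreconnected_image.mp this
  have hDcompl : D ⊆ {p}ᶜ := by
    intro y hy hyp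
    rw [Set.mem_singleton_iff] at hyp
    subst hyp
    exact hy.2 (Or.inl rfl)
  have hpcl : p ∈ closure D := by
    rw [mem_closure_iff]
    intro o ho hpo
    have hoo : IsOpen (((↑) : Y → OnePoint Y) '' o) := OnePoint.isOpenMap_coe o ho
    obtain ⟨z, hz1, hz2⟩ := mem_closure_iff.mp hclq _ hoo ⟨p, hpo, rfl⟩
    obtain ⟨y, hyo, rfl⟩ := hz1
    exact ⟨y, hyo, hz2⟩
  have hnc : ¬ IsCompact (closure D) := by
    intro hcomp
    have h1 : IsCompact (((↑) : Y → OnePoint Y) '' closure D) :=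
      hcomp.image OnePoint.continuous_coe
    have h2 : closure (((↑) : Y → OnePoint Y) '' D) ⊆ ((↑) : Y → OnePoint Y) '' closure D :=
      closure_minimal (Set.image_mono subset_closure) h1.isClosed
    rw [hDimg] at h2
    exact OnePoint.infty_notMem_range_coe
      (Set.image_subset_range _ _ (h2 hclinf))
  exact ⟨D, hDcompl, hDconn, hnc, hpcl⟩
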